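/- For β strictly greater than β_c, the invariance relation Rμ = e^β μ has no nonzero solution among finite Borel measures μ on Z. -/

import Mathlib

open MeasureTheory Filter

section Aux

variable {Z : Type*} [TopologicalSpace Z] [CompactSpace Z] [T2Space Z]

/-- Fibers of a local homeomorphism on a compact space are finite. -/
theorem fiber_finite_of_isLocalHomeomorph {g : Z → Z} (hg : IsLocalHomeomorph g) (z : Z) :
    (g ⁻¹' {z}).Finite := by
  classical
  choose e hes heg using hg
  have hFc : IsCompact (g ⁻¹' {z}) :=
    (isClosed_singleton.preimage (IsLocalHomeomorph.continuous
      (fun x => ⟨e x, hes x, heg x⟩))).isCompact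
  obtain ⟨t, ht⟩ := hFc.elim_nhds_subcover (fun x => (e x).source)
    (fun x _ => (e x).open_source.mem_nhds (hes x))
  have hsub : g ⁻¹' {z} ⊆ ⋃ x ∈ t, (g ⁻¹' {z} ∩ (e x).source) := by
    intro p hp
    obtain ⟨x, hx, hpx⟩ := Set.mem_iUnion₂.mp (ht.2 hp)
    exact Set.mem_iUnion₂.mpr ⟨x, hx, hp, hpx⟩
  refine Set.Finite.subset (Set.Finite.biUnion t.finite_toSet fun x _ => ?_) hsub
  apply Set.Subsingleton.finite
  intro p hp q hq
  apply (e x).injOn hp.2 hq.2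
  rw [← heg x]
  have hp1 : g p = z := hp.1
  have hq1 : g q = z := hq.1
  rw [hp1, hq1]

/-- The fiber cardinality of a local homeomorphism on a compact Hausdorff space is
locally constant. -/
theorem card_fiber_eventually_const {g : Z → Z} (hg : IsLocalHomeomorph g) (z₀ : Z) :
    ∀ᶠ z in nhds z₀, Nat.card (g ⁻¹' {z}) = Nat.card (g ⁻¹' {z₀}) := by
  classical
  have hgc : Continuous g := hg.continuous
  have hFfin : (g ⁻¹' {z₀}).Finite := fiber_finite_of_isLocalHomeomorph hg z₀
  choose e hes heg using hg
  obtain ⟨O, hO, hOdisj⟩ := hFfin.t2_separation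
  set U : Z → Set Z := fun w => (e w).source ∩ O w with hU
  have hUopen : ∀ w, IsOpen (U w) := fun w => (e w).open_source.inter (hO w).2
  have hwU : ∀ w, w ∈ U w := fun w => ⟨hes w, (hO w).1⟩
  have hUinj : ∀ w, Set.InjOn g (U w) := fun w => by
    rw [heg w]; exact (e w).injOn.mono Set.inter_subset_left
  have hgopen : IsOpenMap g := IsLocalHomeomorph.isOpenMap (fun x => ⟨e x, hes x, heg x⟩)
  set K : Set Z := (⋃ w ∈ g ⁻¹' {z₀}, U w)ᶜ with hK
  have hKclosed : IsClosed K := (isOpen_biUnion fun w _ => hUopen w).isClosed_compl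
  have hgK : IsClosed (g '' K) := (hKclosed.isCompact.image hgc).isClosed
  have hz₀K : z₀ ∉ g '' K := by
    rintro ⟨k, hk, hkz⟩
    exact hk (Set.mem_biUnion (show k ∈ g ⁻¹' {z₀} from hkz) (hwU k))
  set V : Set Z := (⋂ w ∈ hFfin.toFinset, g '' U w) ∩ (g '' K)ᶜ with hV
  have hVopen : IsOpen V :=
    (isOpen_biInter_finset fun w _ => hgopen _ (hUopen w)).inter hgK.isOpen_compl
  have hz₀V : z₀ ∈ V := by
    refine ⟨Set.mem_biInter fun w hw => ⟨w, hwU w, hFfin.mem_toFinset.mp hw⟩, hz₀K⟩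
  filter_upwards [hVopen.mem_nhds hz₀V] with z hz
  obtain ⟨hz1, hz2⟩ := hz
  have hex : ∀ w : Z, w ∈ g ⁻¹' {z₀} → ∃ p, p ∈ U w ∧ g p = z := by
    intro w hw
    have := Set.mem_iInter₂.mp hz1 w (hFfin.mem_toFinset.mpr hw)
    obtain ⟨p, hp, hpz⟩ := this
    exact ⟨p, hp, hpz⟩
  choose! φ hφU hφg using hex
  have hbij : Set.BijOn φ (g ⁻¹' {z₀}) (g ⁻¹' {z}) := by
    refine ⟨fun w hw => hφg w hw, ?_, ?_⟩
    · intro w hw w' hw' hpq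
      by_contra hne
      exact Set.disjoint_left.mp (hOdisj hw hw' hne) (hφU w hw).2 (hpq ▸ (hφU w' hw').2)
    · intro p hp
      have hpz : g p = z := hp
      have hpK : p ∉ K := fun hKp => hz2 ⟨p, hKp, hpz⟩
      have hpU : p ∈ ⋃ w ∈ g ⁻¹' {z₀}, U w := by
        by_contra hc; exact hpK hc
      obtain ⟨w, hw, hpw⟩ := Set.mem_iUnion₂.mp hpU
      refine ⟨w, hw, hUinj w (hφU w hw) hpw ?_⟩
      rw [hφg w hw, hpz]
  exact (Nat.card_congr (hbij.equiv φ)).symm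

theorem continuous_card_fiber {g : Z → Z} (hg : IsLocalHomeomorph g) :
    Continuous fun z : Z => (Nat.card (g ⁻¹' {z}) : ℝ) := by
  rw [continuous_iff_continuousAt]
  intro z₀
  refine Filter.EventuallyEq.continuousAt (y := (Nat.card (g ⁻¹' {z₀}) : ℝ)) ?_
  exact (card_fiber_eventually_const hg z₀).mono fun z hz => by dsimp only; rw [hz]

theorem isLocalHomeomorph_iterate {h : Z → Z} (hl : IsLocalHomeomorph h) (n : ℕ) :
    IsLocalHomeomorph (h^[n]) := by
  induction n with
  | zero =>
      have : (Homeomorph.refl Z : Z → Z) = h^[0] := rfl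
      exact this ▸ (Homeomorph.refl Z).isLocalHomeomorph
  | succ n ih =>
      rw [Function.iterate_succ']
      exact hl.comp ih

/-- The sigma decomposition of the `(n+1)`-st fiber. -/
noncomputable def fiberSigmaEquiv (h : Z → Z) (n : ℕ) (z : Z) :
    (Σ w : (h ⁻¹' {z} : Set Z), ((h^[n]) ⁻¹' {(w : Z)} : Set Z)) ≃
      ((h^[n + 1]) ⁻¹' {z} : Set Z) := by
  apply Equiv.ofBijective (fun q => ⟨(q.2 : Z), by
    have h1 : h^[n] (q.2 : Z) = (q.1 : Z) := q.2.2
    have h2 : h (q.1 : Z) = z := q.1.2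
    simp only [Set.mem_preimage, Set.mem_singleton_iff, Function.iterate_succ',
      Function.comp_apply, h1, h2]⟩)
  constructor
  · rintro ⟨⟨w, hw⟩, ⟨p, hp⟩⟩ ⟨⟨w', hw'⟩, ⟨p', hp'⟩⟩ hpq
    have hpp' : p = p' := congrArg Subtype.val hpq
    subst hpp'
    have hww' : w = w' := by
      have h1 : h^[n] p = w := hp
      have h2 : h^[n] p = w' := hp'
      rw [← h1, h2]
    subst hww'
    rfl
  · rintro ⟨p, hp⟩
    have hp' : h (h^[n] p) = z := by
      have : h^[n + 1] p = z := hp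
      rwa [Function.iterate_succ', Function.comp_apply] at this
    exact ⟨⟨⟨h^[n] p, hp'⟩, ⟨p, rfl⟩⟩, rfl⟩

theorem card_fiber_succ {h : Z → Z} (hl : IsLocalHomeomorph h) (n : ℕ) (z : Z) :
    (Nat.card ((h^[n + 1]) ⁻¹' {z}) : ℝ) =
      ∑' w : (h ⁻¹' {z} : Set Z), (Nat.card ((h^[n]) ⁻¹' {(w : Z)}) : ℝ) := by
  classical
  haveI : Fintype (h ⁻¹' {z} : Set Z) := (fiber_finite_of_isLocalHomeomorph hl z).fintype
  haveI : ∀ w : (h ⁻¹' {z} : Set Z), Fintype ((h^[n]) ⁻¹' {(w : Z)} : Set Z) := fun w =>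
    (fiber_finite_of_isLocalHomeomorph (isLocalHomeomorph_iterate hl n) (w : Z)).fintype
  rw [tsum_fintype, ← Nat.card_congr (fiberSigmaEquiv h n z)]
  have : Nat.card (Σ w : (h ⁻¹' {z} : Set Z), ((h^[n]) ⁻¹' {(w : Z)} : Set Z)) =
      ∑ w : (h ⁻¹' {z} : Set Z), Nat.card ((h^[n]) ⁻¹' {(w : Z)} : Set Z) := by
    simp [Nat.card_eq_fintype_card, Fintype.card_sigma]
  rw [this]
  push_cast
  rfl

end Aux

/-- The critical inverse temperature `β_c = limsup n⁻¹ ln (max_z |h⁻ⁿ(z)|)`. -/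
noncomputable def betaC {Z : Type*} (h : Z → Z) : ℝ :=
  Filter.limsup
    (fun n : ℕ => (n : ℝ)⁻¹ *
      Real.log (⨆ z : Z, (Nat.card ((h^[n]) ⁻¹' {z}) : ℝ))) Filter.atTop

/-- For `β > β_c` the invariance relation `Rμ = e^β μ` has no nonzero solution
among finite Borel measures. -/
theorem stmt7 {Z : Type*} [TopologicalSpace Z] [CompactSpace Z] [T2Space Z] [Nonempty Z]
    [MeasurableSpace Z] [BorelSpace Z]
    (h : Z → Z) (hloc : IsLocalHomeomorph h) (hsurj : Function.Surjective h)
    (R : Measure Z → Measure Z)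
    (hRfin : ∀ ν : Measure Z, IsFiniteMeasure ν → IsFiniteMeasure (R ν))
    (hR : ∀ ν : Measure Z, IsFiniteMeasure ν → ∀ a : C(Z, ℝ),
      ∫ z, a z ∂(R ν) = ∫ z, (∑' w : (h ⁻¹' {z}), a (w : Z)) ∂ν)
    {β : ℝ} (hβ : betaC h < β)
    (μ : Measure Z) [IsFiniteMeasure μ]
    (hinv : R μ = ENNReal.ofReal (Real.exp β) • μ) :
    μ = 0 := by
  classical
  by_contra hμ
  -- the fiber-counting functions
  set f : ℕ → Z → ℝ := fun n z => (Nat.card ((h^[n]) ⁻¹' {z}) : ℝ) with hf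
  have hfc : ∀ n, Continuous (f n) := fun n =>
    continuous_card_fiber (isLocalHomeomorph_iterate hloc n)
  -- the supremum
  set S : ℕ → ℝ := fun n => ⨆ z : Z, f n z with hS
  have hbdd : ∀ n, BddAbove (Set.range (f n)) := by
    intro n
    obtain ⟨x, -, hx⟩ := isCompact_univ.exists_isMaxOn (f := f n) Set.univ_nonempty
      ((hfc n).continuousOn)
    exact ⟨f n x, by rintro y ⟨z, rfl⟩; exact hx (Set.mem_univ z)⟩
  have hle : ∀ n z, f n z ≤ S n := fun n z => le_ciSup (hbdd n) z
  -- each value f n z ≥ 1 by surjectivity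
  have hfiber_fin : ∀ n z, ((h^[n]) ⁻¹' {z} : Set Z).Finite := fun n z =>
    fiber_finite_of_isLocalHomeomorph (isLocalHomeomorph_iterate hloc n) z
  have hf1 : ∀ n z, 1 ≤ f n z := by
    intro n z
    obtain ⟨p, hp⟩ := (hsurj.iterate n) z
    have hne : ((h^[n]) ⁻¹' {z} : Set Z).Nonempty := ⟨p, hp⟩
    have : 0 < Nat.card ((h^[n]) ⁻¹' {z} : Set Z) := by
      haveI := (hfiber_fin n z).fintype
      rw [Nat.card_eq_fintype_card, Fintype.card_pos_iff]
      exact hne.to_subtype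
    show (1 : ℝ) ≤ (Nat.card ((h^[n]) ⁻¹' {z} : Set Z) : ℝ)
    exact_mod_cast this
  have hS1 : ∀ n, 1 ≤ S n := fun n => le_trans (hf1 n (Classical.arbitrary Z)) (hle n _)
  -- f 0 = 1
  have hf0 : ∀ z, f 0 z = 1 := by
    intro z
    simp [hf, Function.iterate_zero, Set.preimage_id]
  -- recursion: f (n+1) z = ∑' w : h⁻¹ {z}, f n w
  have hrec : ∀ n z, f (n + 1) z = ∑' w : (h ⁻¹' {z} : Set Z), f n (w : Z) := fun n z =>
    card_fiber_succ hloc n z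
  -- integrability
  have hint : ∀ n, Integrable (f n) μ := fun n =>
    (hfc n).integrable_of_hasCompactSupport (HasCompactSupport.of_compactSpace _)
  -- total mass
  set m : ℝ := (μ Set.univ).toReal with hm
  have hm0 : 0 < m := by
    rw [hm, ENNReal.toReal_pos_iff]
    exact ⟨Measure.measure_univ_pos.mpr hμ, measure_lt_top μ _⟩
  -- key integral identity
  have hkey : ∀ n, ∫ z, f n z ∂μ = Real.exp β ^ n * m := by
    intro n
    induction n with
    | zero => simp [hf0, m, measureReal_def]
    | succ n ih =>
        have step : ∫ z, f (n + 1) z ∂μ = Real.exp β * ∫ z, f n z ∂μ := by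
          have h1 : ∫ z, f (n + 1) z ∂μ
              = ∫ z, (∑' w : (h ⁻¹' {z} : Set Z), f n (w : Z)) ∂μ := by
            refine integral_congr_ae (Filter.Eventually.of_forall fun z => hrec n z)
          have h2 : ∫ z, (⟨f n, hfc n⟩ : C(Z, ℝ)) z ∂(R μ)
              = ∫ z, (∑' w : (h ⁻¹' {z} : Set Z), f n (w : Z)) ∂μ :=
            hR μ inferInstance ⟨f n, hfc n⟩
          rw [h1, ← h2, hinv, integral_smul_measure]
          simp [ENNReal.toReal_ofReal (Real.exp_nonneg β), smul_eq_mul]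
        rw [step, ih]; ring
  -- comparison with the supremum
  have hexp_le : ∀ n, Real.exp β ^ n ≤ S n := by
    intro n
    have h1 : ∫ z, f n z ∂μ ≤ ∫ _z, S n ∂μ := by
      refine integral_mono (hint n) (integrable_const _) fun z => hle n z
    rw [hkey n] at h1
    rw [integral_const] at h1
    have h2 : Real.exp β ^ n * m ≤ S n * m := by
      calc Real.exp β ^ n * m ≤ (μ Set.univ).toReal • S n := h1
      _ = S n * m := by rw [smul_eq_mul, mul_comm, hm]
    exact le_of_mul_le_mul_right h2 hm0
  -- derive β ≤ each term (n ≥ 1)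
  have hβle : ∀ n : ℕ, 1 ≤ n → β ≤ (n : ℝ)⁻¹ * Real.log (S n) := by
    intro n hn
    have hSpos : (0 : ℝ) < S n := lt_of_lt_of_le zero_lt_one (hS1 n)
    have h1 : (n : ℝ) * β ≤ Real.log (S n) := by
      have he : Real.exp ((n : ℝ) * β) ≤ S n := by
        rw [Real.exp_nat_mul]; exact hexp_le n
      have := (Real.log_le_log_iff (Real.exp_pos _) hSpos).mpr he
      rwa [Real.log_exp] at this
    have hnpos : (0 : ℝ) < n := by exact_mod_cast hn
    calc β = (n : ℝ)⁻¹ * ((n : ℝ) * β) := by field_simp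
    _ ≤ (n : ℝ)⁻¹ * Real.log (S n) := by
        exact mul_le_mul_of_nonneg_left h1 (by positivity)
  -- submultiplicativity: S n ≤ S 1 ^ n, giving boundedness
  have hsub : ∀ n, S (n + 1) ≤ S 1 * S n := by
    intro n
    refine ciSup_le fun z => ?_
    rw [hrec n z]
    haveI := (fiber_finite_of_isLocalHomeomorph hloc z).fintype
    rw [tsum_fintype]
    calc ∑ w : (h ⁻¹' {z} : Set Z), f n (w : Z)
        ≤ ∑ _w : (h ⁻¹' {z} : Set Z), S n := by
          exact Finset.sum_le_sum fun w _ => hle n (w : Z)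
      _ = (Fintype.card (h ⁻¹' {z} : Set Z) : ℝ) * S n := by
          rw [Finset.sum_const]; simp [nsmul_eq_mul]
      _ = f 1 z * S n := by
          congr 1
          have : Nat.card ((h^[1]) ⁻¹' {z} : Set Z) = Fintype.card (h ⁻¹' {z} : Set Z) := by
            rw [Function.iterate_one, Nat.card_eq_fintype_card]
          simp only [hf, this]
      _ ≤ S 1 * S n := by
          exact mul_le_mul_of_nonneg_right (hle 1 z)
            (le_trans zero_le_one (hS1 n))
  have hSpow : ∀ n, S n ≤ S 1 ^ n := by
    intro n
    induction n with
    | zero =>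
        have : S 0 = 1 := by
          refine le_antisymm (ciSup_le fun z => le_of_eq (hf0 z)) (hS1 0)
        simp [this]
    | succ n ih =>
        calc S (n + 1) ≤ S 1 * S n := hsub n
        _ ≤ S 1 * S 1 ^ n := by
            exact mul_le_mul_of_nonneg_left ih (le_trans zero_le_one (hS1 1))
        _ = S 1 ^ (n + 1) := by ring
  -- boundedness of the limsup sequence
  have hbound : ∀ n : ℕ, (n : ℝ)⁻¹ * Real.log (S n) ≤ Real.log (S 1) := by
    intro n
    rcases Nat.eq_zero_or_pos n with rfl | hn
    · simp
      exact Real.log_nonneg (hS1 1)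
    · have hlog : Real.log (S n) ≤ (n : ℝ) * Real.log (S 1) := by
        calc Real.log (S n) ≤ Real.log (S 1 ^ n) :=
          (Real.log_le_log_iff (lt_of_lt_of_le zero_lt_one (hS1 n))
            (pow_pos (lt_of_lt_of_le zero_lt_one (hS1 1)) n)).mpr (hSpow n)
        _ = (n : ℝ) * Real.log (S 1) := by rw [Real.log_pow]
      have hnpos : (0 : ℝ) < n := by exact_mod_cast hn
      calc (n : ℝ)⁻¹ * Real.log (S n) ≤ (n : ℝ)⁻¹ * ((n : ℝ) * Real.log (S 1)) :=
        mul_le_mul_of_nonneg_left hlog (by positivity)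
      _ = Real.log (S 1) := by field_simp
  -- conclude β ≤ betaC h
  have hfinal : β ≤ betaC h := by
    refine le_limsup_of_frequently_le ?_ ?_
    · exact (Filter.eventually_atTop.mpr ⟨1, fun n hn => hβle n hn⟩).frequently
    · exact Filter.isBoundedUnder_of ⟨Real.log (S 1), hbound⟩
  exact absurd hβ (not_lt.mpr hfinal)
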